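/- With H_1, H_2, H_3 as above in Alt_5, for every pair {H_i, H_j} of distinct subgroups, the coset complex CC(Alt_5, {H_i, H_j}) is connected; equivalently, Alt_5 is generated by H_i ∪ H_j for every i ≠ j. -/

import Mathlib

open scoped ContinuousMap Pointwise

set_option maxHeartbeats 1000000
set_option synthInstance.maxHeartbeats 1000000

universe u v

/-- An abstract simplicial complex on a vertex type `V`. -/
structure AbsSimplicialComplex (V : Type u) where
  faces : Set (Finset V)
  nonempty_of_mem : ∀ {s : Finset V}, s ∈ faces → s.Nonempty
  down_closed : ∀ {s t : Finset V}, s ∈ faces → t ⊆ s → t.Nonempty → t ∈ faces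

namespace AbsSimplicialComplex

variable {V : Type u}

/-- The vertices of an abstract simplicial complex. -/
def vertices (X : AbsSimplicialComplex V) : Set V := {v | {v} ∈ X.faces}

/-- `X` has dimension `d`. -/
def Dim (X : AbsSimplicialComplex V) (d : ℕ) : Prop :=
  (∀ s ∈ X.faces, s.card ≤ d + 1) ∧ ∃ s ∈ X.faces, s.card = d + 1

/-- A facet is a maximal simplex. -/
def IsFacet (X : AbsSimplicialComplex V) (s : Finset V) : Prop :=
  s ∈ X.faces ∧ ∀ t ∈ X.faces, s ⊆ t → t = s

/-- A complex is pure of dimension `d` if all its facets have dimension `d`. -/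
def IsPure (X : AbsSimplicialComplex V) (d : ℕ) : Prop :=
  (∀ s ∈ X.faces, s.card ≤ d + 1) ∧ ∀ s, X.IsFacet s → s.card = d + 1

/-- The link of a simplex `σ`. -/
def link [DecidableEq V] (X : AbsSimplicialComplex V) (σ : Finset V) :
    AbsSimplicialComplex V where
  faces := {t | Disjoint t σ ∧ t ∪ σ ∈ X.faces ∧ t.Nonempty}
  nonempty_of_mem h := h.2.2
  down_closed := by
    rintro s t ⟨hd, hu, -⟩ hts htne
    refine ⟨Finset.disjoint_of_subset_left hts hd, ?_, htne⟩
    exact X.down_closed hu (Finset.union_subset_union_left hts)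
      ⟨htne.choose, Finset.mem_union_left _ htne.choose_spec⟩

/-- The geometric realisation of an abstract simplicial complex, as the set of
convex-combination functions supported on a face. -/
abbrev geomReal (X : AbsSimplicialComplex V) : Type u :=
  {f : V → ℝ // ∃ s ∈ X.faces, (∀ v ∉ s, f v = 0) ∧ (∀ v, 0 ≤ f v) ∧ ∑ v ∈ s, f v = 1}

/-- The support of a point of the geometric realisation. -/
def ptSupport {X : AbsSimplicialComplex V} (p : geomReal X) : Set V := {v | p.1 v ≠ 0}

/-- The complement `|X| \ |X^{(s)}|` of the `s`-skeleton in the geometric realisation: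
the points whose open simplex has dimension `> s`. -/
abbrev complementSkeleton (X : AbsSimplicialComplex V) (s : ℤ) : Type u :=
  {p : geomReal X // s + 2 ≤ (Set.ncard (ptSupport p) : ℤ)}

/-- The barycentric subdivision: simplices are chains of faces of `X`. -/
def barySubdiv (X : AbsSimplicialComplex V) : AbsSimplicialComplex (Finset V) where
  faces := {c | c.Nonempty ∧ (∀ s ∈ c, s ∈ X.faces) ∧ IsChain (· ⊆ ·) (c : Set (Finset V))}
  nonempty_of_mem h := h.1
  down_closed := by
    rintro c d ⟨-, hmem, hchain⟩ hdc hdne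
    exact ⟨hdne, fun s hs => hmem s (hdc hs), IsChain.mono (Finset.coe_subset.mpr hdc) hchain⟩

/-- Two facets are adjacent if they intersect in a codimension-one face. -/
def Adjacent [DecidableEq V] (X : AbsSimplicialComplex V) (s t : Finset V) : Prop :=
  X.IsFacet s ∧ X.IsFacet t ∧ s ≠ t ∧ (s ∩ t).card + 1 = s.card

/-- A chamber complex: any two facets are connected by a gallery. -/
def IsChamberComplex [DecidableEq V] (X : AbsSimplicialComplex V) : Prop :=
  ∀ s t, X.IsFacet s → X.IsFacet t → Relation.ReflTransGen X.Adjacent s t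

/-- The chamber graph of a complex, as a 1-dimensional simplicial complex. -/
def chamberGraph [DecidableEq V] (X : AbsSimplicialComplex V) :
    AbsSimplicialComplex (Finset V) where
  faces := {p | p.Nonempty ∧ p.card ≤ 2 ∧ (∀ F ∈ p, X.IsFacet F) ∧
      ∀ F ∈ p, ∀ F' ∈ p, F = F' ∨ X.Adjacent F F'}
  nonempty_of_mem h := h.1
  down_closed := by
    rintro p q ⟨-, hcard, hfac, hadj⟩ hqp hqne
    exact ⟨hqne, le_trans (Finset.card_le_card hqp) hcard,
      fun F hF => hfac F (hqp hF), fun F hF F' hF' => hadj F (hqp hF) F' (hqp hF')⟩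

end AbsSimplicialComplex

open AbsSimplicialComplex

/-- `n`-connectedness of a topological space (`n = -1` meaning nonempty). -/
def IsNConnectedSpace (X : Type*) [TopologicalSpace X] (n : ℤ) : Prop :=
  (-1 ≤ n → Nonempty X) ∧
    ∀ k : ℕ, (k : ℤ) ≤ n → ∀ x : X, Subsingleton (HomotopyGroup (Fin k) X x)

/-- The basepoint of the `n`-sphere. -/
noncomputable def spherePoint (n : ℕ) :
    Metric.sphere (0 : EuclideanSpace ℝ (Fin (n + 1))) 1 :=
  ⟨EuclideanSpace.single 0 1, by simp⟩

/-- The wedge of a family of `n`-spheres indexed by `ι` (a point if `ι` is empty). -/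
def WedgeOfSpheres (ι : Type) (n : ℕ) : Type :=
  Quotient (Relation.EqvGen.setoid
    (fun (a b : (Σ _ : ι, Metric.sphere (0 : EuclideanSpace ℝ (Fin (n + 1))) 1) ⊕ Unit) =>
      ∃ i, a = Sum.inl ⟨i, spherePoint n⟩ ∧ b = Sum.inr ()))

noncomputable instance (ι : Type) (n : ℕ) : TopologicalSpace (WedgeOfSpheres ι n) :=
  inferInstanceAs (TopologicalSpace (Quotient _))

/-- A space is `m`-spherical if it is homotopy equivalent to a wedge of `m`-spheres. -/
def IsSpherical (m : ℕ) (X : Type*) [TopologicalSpace X] : Prop :=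
  ∃ ι : Type, Nonempty (X ≃ₕ WedgeOfSpheres ι m)

namespace AbsSimplicialComplex

variable {V : Type u}

/-- Ordered simplices: tuples of vertices spanning a face. -/
def OrderedSimplex [DecidableEq V] (X : AbsSimplicialComplex V) (n : ℕ) : Type u :=
  {σ : Fin (n + 1) → V // Finset.image σ Finset.univ ∈ X.faces}

/-- The simplicial `n`-chains with coefficients in `R`. -/
abbrev Chains (R : Type v) [CommRing R] [DecidableEq V] (X : AbsSimplicialComplex V)
    (n : ℕ) : Type (max u v) := OrderedSimplex X n →₀ R

/-- The `i`-th face of an ordered simplex. -/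
def faceMap [DecidableEq V] {X : AbsSimplicialComplex V} {n : ℕ}
    (σ : OrderedSimplex X (n + 1)) (i : Fin (n + 2)) : OrderedSimplex X n :=
  ⟨σ.1 ∘ i.succAbove, by
    refine X.down_closed σ.2 ?_ (Finset.univ_nonempty.image _)
    intro v hv
    simp only [Finset.mem_image, Function.comp_apply] at hv ⊢
    obtain ⟨j, -, rfl⟩ := hv
    exact ⟨i.succAbove j, Finset.mem_univ _, rfl⟩⟩

/-- The simplicial boundary map. -/
noncomputable def boundary (R : Type*) [CommRing R] [DecidableEq V]
    (X : AbsSimplicialComplex V) (n : ℕ) : Chains R X (n + 1) →ₗ[R] Chains R X n :=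
  Finsupp.lsum R fun σ => LinearMap.toSpanSingleton R _
    (∑ i : Fin (n + 2), ((-1 : R) ^ (i : ℕ)) • Finsupp.single (faceMap σ i) (1 : R))

/-- The augmentation map. -/
noncomputable def augmentation (R : Type*) [CommRing R] [DecidableEq V]
    (X : AbsSimplicialComplex V) : Chains R X 0 →ₗ[R] R :=
  Finsupp.lsum R fun _ => LinearMap.id

/-- Quotient `ker f / (im g ∩ ker f)`, used to define homology. -/
noncomputable def homologyOf {R M N P : Type*} [CommRing R] [AddCommGroup M]
    [AddCommGroup N] [AddCommGroup P] [Module R M] [Module R N] [Module R P]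
    (f : M →ₗ[R] P) (g : N →ₗ[R] M) : Type _ :=
  LinearMap.ker f ⧸ Submodule.comap (LinearMap.ker f).subtype (LinearMap.range g)

/-- Reduced simplicial homology of `X` with coefficients in `R`. -/
noncomputable def reducedHomology (R : Type v) [CommRing R] [DecidableEq V]
    (X : AbsSimplicialComplex V) : ℕ → Type _
  | 0 => homologyOf (augmentation R X) (boundary R X 0)
  | (n + 1) => homologyOf (boundary R X n) (boundary R X (n + 1))

/-- `X` is `m`-acyclic over `R`: reduced homology vanishes in degrees `≤ m`
(and `X` is nonempty if `m ≥ -1`). -/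
def IsAcyclicTo (R : Type*) [CommRing R] [DecidableEq V] (X : AbsSimplicialComplex V)
    (m : ℤ) : Prop :=
  (-1 ≤ m → X.faces.Nonempty) ∧
    ∀ i : ℕ, (i : ℤ) ≤ m → Subsingleton (reducedHomology R X i)

/-- `X` is Cohen–Macaulay over `R`. -/
def IsCM (R : Type*) [CommRing R] [DecidableEq V] (X : AbsSimplicialComplex V)
    (d : ℕ) : Prop :=
  X.Dim d ∧ IsAcyclicTo R X ((d : ℤ) - 1) ∧
    ∀ σ ∈ X.faces, IsAcyclicTo R (X.link σ) ((d : ℤ) - σ.card - 1)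

/-- `X` is homotopy Cohen–Macaulay. -/
def IsHCM [DecidableEq V] (X : AbsSimplicialComplex V) (d : ℕ) : Prop :=
  X.Dim d ∧ IsNConnectedSpace (geomReal X) ((d : ℤ) - 1) ∧
    ∀ σ ∈ X.faces, IsNConnectedSpace (geomReal (X.link σ)) ((d : ℤ) - σ.card - 1)

end AbsSimplicialComplex

/-- The coset complex `CC(G, H)`: the nerve of the covering of `G` by the
left cosets of the subgroups in the family `H`. -/
def cosetComplex (G : Type*) [Group G] (H : Set (Subgroup G)) :
    AbsSimplicialComplex (Set G) where
  faces := {s | s.Nonempty ∧ (∀ A ∈ s, ∃ g : G, ∃ K ∈ H, A = g • (K : Set G)) ∧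
      (⋂ A ∈ s, (A : Set G)).Nonempty}
  nonempty_of_mem h := h.1
  down_closed := by
    rintro s t ⟨-, hco, ⟨x, hx⟩⟩ hts htne
    refine ⟨htne, fun A hA => hco A (hts hA), ⟨x, ?_⟩⟩
    simp only [Set.mem_iInter] at hx ⊢
    exact fun A hA => hx A (hts hA)


/-- The `5`-cycle `(1, 2, 3, 4, 5)` as an element of `Alt₅`. -/
def evenFiveCycle : alternatingGroup (Fin 5) :=
  ⟨finRotate 5, Equiv.Perm.mem_alternatingGroup.2 (by decide)⟩

/-- The `3`-cycle `(1, 3, 5)` as an element of `Alt₅`. -/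
def evenThreeCycle : alternatingGroup (Fin 5) :=
  ⟨Equiv.swap 0 2 * Equiv.swap 2 4, Equiv.Perm.mem_alternatingGroup.2 (by decide)⟩

/-- `H₁ = Stab({2})`. -/
def AltH1 : Subgroup ↥(alternatingGroup (Fin 5)) :=
  MulAction.stabilizer ↥(alternatingGroup (Fin 5)) (1 : Fin 5)

/-- `H₂ = N(⟨(1,2,3,4,5)⟩)`. -/
def AltH2 : Subgroup ↥(alternatingGroup (Fin 5)) :=
  Subgroup.normalizer (Subgroup.zpowers evenFiveCycle)

/-- `H₃ = N(⟨(1,3,5)⟩)`. -/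
def AltH3 : Subgroup ↥(alternatingGroup (Fin 5)) :=
  Subgroup.normalizer (Subgroup.zpowers evenThreeCycle)

noncomputable section CosetConnHelpers

open AbsSimplicialComplex
open scoped Classical

namespace CosetConn

/-- Two finsets supporting the same function give the same sum. -/
theorem sum_support_eq {V : Type u} [DecidableEq V] (f : V → ℝ) {s t : Finset V}
    (hs : ∀ v ∉ s, f v = 0) (ht : ∀ v ∉ t, f v = 0) :
    ∑ v ∈ s, f v = ∑ v ∈ t, f v := by
  have h1 : ∑ v ∈ s ∩ t, f v = ∑ v ∈ s, f v :=
    Finset.sum_subset Finset.inter_subset_left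
      (fun x hx hnx => ht x (fun hxt => hnx (Finset.mem_inter.2 ⟨hx, hxt⟩)))
  have h2 : ∑ v ∈ s ∩ t, f v = ∑ v ∈ t, f v :=
    Finset.sum_subset Finset.inter_subset_right
      (fun x hx hnx => hs x (fun hxs => hnx (Finset.mem_inter.2 ⟨hxs, hx⟩)))
  rw [← h1, ← h2]

/-- Straight-line paths inside a common face. -/
theorem joined_of_face {V : Type u} {X : AbsSimplicialComplex V} {s : Finset V}
    (hs : s ∈ X.faces) (p q : geomReal X)
    (hp : ∀ v ∉ s, p.1 v = 0) (hq : ∀ v ∉ s, q.1 v = 0) : Joined p q := by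
  obtain ⟨sp, hsp, hp0, hpnn, hpsum⟩ := p.2
  obtain ⟨sq, hsq, hq0, hqnn, hqsum⟩ := q.2
  have hps : ∑ v ∈ s, p.1 v = 1 := by rw [sum_support_eq p.1 hp hp0]; exact hpsum
  have hqs : ∑ v ∈ s, q.1 v = 1 := by rw [sum_support_eq q.1 hq hq0]; exact hqsum
  let F : unitInterval → geomReal X := fun t =>
    ⟨fun v => (1 - t.1) * p.1 v + t.1 * q.1 v, s, hs,
      fun v hv => by simp [hp v hv, hq v hv],
      fun v => add_nonneg (mul_nonneg (sub_nonneg.2 t.2.2) (hpnn v))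
        (mul_nonneg t.2.1 (hqnn v)),
      by rw [Finset.sum_add_distrib, ← Finset.mul_sum, ← Finset.mul_sum, hps, hqs]; ring⟩
  refine ⟨⟨⟨F, ?_⟩, ?_, ?_⟩⟩
  · apply Continuous.subtype_mk
    apply continuous_pi
    intro v
    exact ((continuous_const.sub continuous_subtype_val).mul continuous_const).add
      (continuous_subtype_val.mul continuous_const)
  · apply Subtype.ext
    funext v
    show (1 - ((0 : unitInterval) : ℝ)) * p.1 v + ((0 : unitInterval) : ℝ) * q.1 v = p.1 v
    norm_num
  · apply Subtype.ext
    funext v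
    show (1 - ((1 : unitInterval) : ℝ)) * p.1 v + ((1 : unitInterval) : ℝ) * q.1 v = q.1 v
    norm_num

/-- The vertex point of the geometric realisation at a vertex `A`. -/
noncomputable def deltaPt {V : Type u} (X : AbsSimplicialComplex V) (A : V)
    (hA : {A} ∈ X.faces) : geomReal X :=
  ⟨fun B => if B = A then 1 else 0, {A}, hA,
    fun v hv => if_neg (by simpa using hv),
    fun v => by dsimp only; split <;> norm_num,
    by simp⟩

theorem deltaPt_apply {V : Type u} (X : AbsSimplicialComplex V) (A : V)
    (hA : {A} ∈ X.faces) (B : V) :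
    (deltaPt X A hA).1 B = if B = A then 1 else 0 := rfl

theorem deltaPt_support {V : Type u} (X : AbsSimplicialComplex V) (A : V)
    (hA : {A} ∈ X.faces) {s : Finset V} (hAs : A ∈ s) :
    ∀ v ∉ s, (deltaPt X A hA).1 v = 0 := by
  intro v hv
  rw [deltaPt_apply, if_neg]
  rintro rfl
  exact hv hAs

theorem deltaPt_congr {V : Type u} (X : AbsSimplicialComplex V) {A A' : V}
    (h : A = A') (hA : {A} ∈ X.faces) :
    deltaPt X A hA = deltaPt X A' (h ▸ hA) := by subst h; rfl

theorem joined_map {X : Type*} {Y : Type*} [TopologicalSpace X] [TopologicalSpace Y]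
    {x y : X} (f : C(X, Y)) (h : Joined x y) : Joined (f x) (f y) := by
  obtain ⟨γ⟩ := h
  exact ⟨γ.map f.continuous⟩

variable {G : Type u} [Group G]

theorem vertex_face (H : Set (Subgroup G)) {J : Subgroup G} (hJ : J ∈ H) (g : G) :
    ({g • (J : Set G)} : Finset (Set G)) ∈ (cosetComplex G H).faces := by
  refine ⟨Finset.singleton_nonempty _, ?_, ?_⟩
  · intro A hA
    rw [Finset.mem_singleton] at hA
    exact ⟨g, J, hJ, hA⟩
  · refine ⟨g, ?_⟩
    simp only [Set.mem_iInter]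
    intro A hA
    rw [Finset.mem_singleton] at hA
    subst hA
    exact ⟨1, J.one_mem, by simp [smul_eq_mul]⟩

theorem edge_face (H : Set (Subgroup G)) {J1 J2 : Subgroup G} (h1 : J1 ∈ H) (h2 : J2 ∈ H)
    (g : G) :
    ({g • (J1 : Set G), g • (J2 : Set G)} : Finset (Set G)) ∈ (cosetComplex G H).faces := by
  refine ⟨Finset.insert_nonempty _ _, ?_, ?_⟩
  · intro A hA
    rw [Finset.mem_insert, Finset.mem_singleton] at hA
    rcases hA with rfl | rfl
    · exact ⟨g, J1, h1, rfl⟩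
    · exact ⟨g, J2, h2, rfl⟩
  · refine ⟨g, ?_⟩
    simp only [Set.mem_iInter]
    intro A hA
    rw [Finset.mem_insert, Finset.mem_singleton] at hA
    rcases hA with rfl | rfl
    · exact ⟨1, J1.one_mem, by simp [smul_eq_mul]⟩
    · exact ⟨1, J2.one_mem, by simp [smul_eq_mul]⟩

/-- Left translation by `g` on the geometric realisation of the coset complex. -/
def transMap (H : Set (Subgroup G)) (g : G) :
    C(geomReal (cosetComplex G H), geomReal (cosetComplex G H)) where
  toFun p := ⟨fun B => p.1 (g⁻¹ • B), by
    obtain ⟨s, hs, h0, hnn, hsum⟩ := p.2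
    refine ⟨s.image (g • ·), ⟨(hs.1).image _, ?_, ?_⟩, ?_, fun v => hnn _, ?_⟩
    · intro A hA
      rw [Finset.mem_image] at hA
      obtain ⟨B, hB, rfl⟩ := hA
      obtain ⟨h, J, hJ, rfl⟩ := hs.2.1 B hB
      exact ⟨g * h, J, hJ, (mul_smul g h _).symm⟩
    · obtain ⟨x, hx⟩ := hs.2.2
      refine ⟨g • x, ?_⟩
      simp only [Set.mem_iInter] at hx ⊢
      intro A hA
      rw [Finset.mem_image] at hA
      obtain ⟨B, hB, rfl⟩ := hA
      exact Set.smul_mem_smul_set (hx B hB)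
    · intro v hv
      apply h0
      intro hvs
      exact hv (Finset.mem_image.2 ⟨g⁻¹ • v, hvs, smul_inv_smul g v⟩)
    · rw [Finset.sum_image (fun x _ y _ hxy => smul_left_cancel g hxy)]
      simpa [inv_smul_smul] using hsum⟩
  continuous_toFun := by
    apply Continuous.subtype_mk
    apply continuous_pi
    intro B
    exact (continuous_apply (g⁻¹ • B)).comp continuous_subtype_val

theorem transMap_delta (H : Set (Subgroup G)) (g : G) (A : Set G)
    (hA : ({A} : Finset (Set G)) ∈ (cosetComplex G H).faces)
    (hA' : ({g • A} : Finset (Set G)) ∈ (cosetComplex G H).faces) :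
    transMap H g (deltaPt _ A hA) = deltaPt _ (g • A) hA' := by
  apply Subtype.ext
  funext B
  show (if g⁻¹ • B = A then (1:ℝ) else 0) = if B = g • A then 1 else 0
  simp [inv_smul_eq_iff]

section Main

variable (K L : Subgroup G)

theorem hKmem : K ∈ ({K, L} : Set (Subgroup G)) := Set.mem_insert _ _
theorem hLmem : L ∈ ({K, L} : Set (Subgroup G)) := Set.mem_insert_of_mem _ rfl

theorem vertK : ({(K : Set G)} : Finset (Set G)) ∈ (cosetComplex G {K, L}).faces := by
  have h := vertex_face {K, L} (hKmem K L) 1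
  rwa [one_smul] at h

theorem joined_edge {J1 J2 : Subgroup G} (h1 : J1 ∈ ({K, L} : Set (Subgroup G)))
    (h2 : J2 ∈ ({K, L} : Set (Subgroup G))) (g : G) :
    Joined (deltaPt _ (g • (J1 : Set G)) (vertex_face _ h1 g))
      (deltaPt _ (g • (J2 : Set G)) (vertex_face _ h2 g)) := by
  refine joined_of_face (edge_face _ h1 h2 g) _ _ ?_ ?_
  · exact deltaPt_support _ _ _ (Finset.mem_insert_self _ _)
  · exact deltaPt_support _ _ _ (Finset.mem_insert_of_mem (Finset.mem_singleton_self _))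

theorem joined_to_K (h : K ⊔ L = ⊤) (g : G) :
    Joined (deltaPt _ (g • (K : Set G)) (vertex_face _ (hKmem K L) g))
      (deltaPt _ (K : Set G) (vertK K L)) := by
  have hg : g ∈ Subgroup.closure ((K : Set G) ∪ (L : Set G)) := by
    rw [← Subgroup.sup_eq_closure, h]
    trivial
  induction hg using Subgroup.closure_induction with
  | mem x hx =>
    rcases hx with hxK | hxL
    · rw [deltaPt_congr _ (smul_coe_set hxK)]
    · have e1 : Joined (deltaPt _ (x • (K : Set G)) (vertex_face _ (hKmem K L) x))
          (deltaPt _ (x • (L : Set G)) (vertex_face _ (hLmem K L) x)) :=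
        joined_edge K L (hKmem K L) (hLmem K L) x
      have e2 : Joined (deltaPt _ ((L : Set G)) ((one_smul G (L : Set G)) ▸ vertex_face _ (hLmem K L) (1:G)))
          (deltaPt _ ((K : Set G)) (vertK K L)) := by
        have e3 := joined_edge K L (hLmem K L) (hKmem K L) (1 : G)
        rw [deltaPt_congr _ (one_smul G (L : Set G)), deltaPt_congr _ (one_smul G (K : Set G))] at e3
        exact e3
      refine Joined.trans ?_ e2
      rw [deltaPt_congr _ (smul_coe_set hxL)] at e1
      exact e1
  | one =>
    rw [deltaPt_congr _ (one_smul G (K : Set G))]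
  | mul a b ha hb pa pb =>
    have step := joined_map (transMap {K, L} a) pb
    rw [transMap_delta _ _ _ _ ((mul_smul a b ((K : Set G))) ▸ vertex_face _ (hKmem K L) (a * b)),
      transMap_delta _ _ _ _ (vertex_face _ (hKmem K L) a)] at step
    rw [deltaPt_congr _ (mul_smul a b ((K : Set G)))]
    exact step.trans pa
  | inv a ha pa =>
    have step := joined_map (transMap {K, L} a⁻¹) pa
    rw [transMap_delta _ _ _ _ (by rw [inv_smul_smul]; exact vertK K L),
      transMap_delta _ _ _ _ (vertex_face _ (hKmem K L) a⁻¹)] at step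
    rw [deltaPt_congr _ (inv_smul_smul a ((K : Set G)))] at step
    exact step.symm

theorem joined_all (h : K ⊔ L = ⊤) (p : geomReal (cosetComplex G {K, L})) :
    Joined p (deltaPt _ (K : Set G) (vertK K L)) := by
  obtain ⟨s, hs, h0, hnn, hsum⟩ := p.2
  obtain ⟨A, hA⟩ := hs.1
  have hAface : ({A} : Finset (Set G)) ∈ (cosetComplex G {K, L}).faces :=
    (cosetComplex G {K, L}).down_closed hs (Finset.singleton_subset_iff.2 hA)
      (Finset.singleton_nonempty A)
  have j1 : Joined p (deltaPt _ A hAface) :=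
    joined_of_face hs p _ h0 (deltaPt_support _ _ _ hA)
  obtain ⟨g, J, hJ, rfl⟩ := hs.2.1 A hA
  rcases hJ with rfl | hJ'
  · exact j1.trans (joined_to_K J L h g)
  · rw [Set.mem_singleton_iff] at hJ'
    subst hJ'
    refine j1.trans (Joined.trans ?_ (joined_to_K K J h g))
    exact (joined_edge K J (hLmem K J) (hKmem K J) g)

theorem pathConnected (h : K ⊔ L = ⊤) :
    PathConnectedSpace (geomReal (cosetComplex G {K, L})) := by
  constructor
  · exact ⟨deltaPt _ (K : Set G) (vertK K L)⟩
  · intro p q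
    exact (joined_all K L h p).trans (joined_all K L h q).symm

theorem connected_of_sup_eq_top (h : K ⊔ L = ⊤) :
    IsNConnectedSpace (geomReal (cosetComplex G {K, L})) 0 := by
  haveI := pathConnected K L h
  constructor
  · intro _
    exact ⟨deltaPt _ (K : Set G) (vertK K L)⟩
  · intro k hk x
    have hk0 : k = 0 := by
      have : (k : ℤ) ≤ 0 := hk
      exact_mod_cast le_antisymm (by exact_mod_cast this) (Nat.zero_le k)
    subst hk0
    haveI : Subsingleton (ZerothHomotopy (geomReal (cosetComplex G {K, L}))) :=
      (pathConnectedSpace_iff_zerothHomotopy.1 ‹_›).2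
    exact (homotopyGroupEquivZerothHomotopyOfIsEmpty (Fin 0) x).subsingleton

end Main
end CosetConn
end CosetConnHelpers

section Generation
open Equiv Equiv.Perm Subgroup
section PrevProven
theorem normal_of_index_two' {G : Type*} [Group G] (M : Subgroup G) (h : M.index = 2) :
    M.Normal := by
  constructor
  intro n hn g
  have key := (Subgroup.mul_mem_iff_of_index_two h (a := g * n) (b := g⁻¹)).2
    (by simp [mul_mem_cancel_right hn])
  simpa [mul_assoc] using key

theorem mem_normalizer_zpowers_of_conj' {G : Type*} [Group G] {t g : G}
    (h : g * t * g⁻¹ = t⁻¹) : g ∈ Subgroup.normalizer (Subgroup.zpowers t) := by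
  have h' : g⁻¹ * t * g = t⁻¹ := by
    have := congrArg (fun x => g⁻¹ * x⁻¹ * g) h
    simp only [mul_assoc] at this
    simp only [mul_inv_rev, inv_inv, mul_assoc] at this ⊢
    rw [← this]
    group
  rw [Subgroup.mem_normalizer_iff]
  intro x
  constructor
  · rintro ⟨n, rfl⟩
    refine ⟨-n, ?_⟩
    show t ^ (-n) = g * t ^ n * g⁻¹
    rw [zpow_neg, ← inv_zpow, ← h, conj_zpow]
  · rintro ⟨n, hn⟩
    refine ⟨-n, ?_⟩
    have hn' : t ^ n = g * x * g⁻¹ := hn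
    have hx : x = g⁻¹ * t ^ n * g := by rw [hn']; group
    show t ^ (-n) = x
    have hc := conj_zpow (i := n) (a := g⁻¹) (b := t)
    rw [inv_inv] at hc
    rw [hx, zpow_neg, ← inv_zpow, ← h', hc]

theorem orderOf_dvd_card_of_mem' {G : Type*} [Group G] {M : Subgroup G} {g : G}
    (hg : g ∈ M) : orderOf g ∣ Nat.card M := by
  have h := orderOf_dvd_natCard (⟨g, hg⟩ : M)
  have e : orderOf (M.subtype ⟨g, hg⟩) = orderOf (⟨g, hg⟩ : M) :=
    orderOf_injective M.subtype M.subtype_injective _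
  simpa using e ▸ h
end PrevProven

abbrev G5 := ↥(alternatingGroup (Fin 5))


def uElt : G5 := ⟨Equiv.swap 0 2 * Equiv.swap 1 3, Equiv.Perm.mem_alternatingGroup.2 (by decide)⟩
def vElt : G5 := ⟨Equiv.swap 0 2 * Equiv.swap 3 4, Equiv.Perm.mem_alternatingGroup.2 (by decide)⟩

instance : MulAction.IsPretransitive G5 (Fin 5) := by
  constructor
  intro x y
  by_cases h : x = y
  · exact ⟨1, by simp [h]⟩
  · obtain ⟨z, hzx, hzy⟩ := (by decide : ∀ x y : Fin 5, ∃ z, z ≠ x ∧ z ≠ y) x y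
    refine ⟨⟨Equiv.swap x z * Equiv.swap x y, Equiv.Perm.mem_alternatingGroup.2 ?_⟩, ?_⟩
    · rw [map_mul, Equiv.Perm.sign_swap (Ne.symm hzx), Equiv.Perm.sign_swap (fun hh => h hh)]
      norm_num
    · show (Equiv.swap x z * Equiv.swap x y) • x = y
      simp only [Equiv.Perm.smul_def, Equiv.Perm.mul_apply, Equiv.swap_apply_left]
      rw [Equiv.swap_apply_of_ne_of_ne (Ne.symm h) (Ne.symm hzy)]

theorem cardG5 : Nat.card G5 = 60 := by
  have h2 : 2 * Fintype.card (alternatingGroup (Fin 5)) = Fintype.card (Perm (Fin 5)) :=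
    two_mul_card_alternatingGroup
  rw [Fintype.card_perm, Fintype.card_fin] at h2
  have h5 : Nat.factorial 5 = 120 := by decide
  rw [h5] at h2
  rw [Nat.card_eq_fintype_card]
  have he : Fintype.card G5 = Fintype.card (alternatingGroup (Fin 5)) :=
    Fintype.card_congr (Equiv.refl _)
  omega

theorem cardH1 : Nat.card AltH1 = 12 := by
  have hi : AltH1.index = 5 := by
    rw [AltH1, MulAction.index_stabilizer_of_transitive]
    simp
  have := AltH1.card_mul_index
  rw [hi, cardG5] at this
  omega

instance : Fact (Nat.Prime 5) := ⟨by norm_num⟩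

theorem orderC5 : orderOf evenFiveCycle = 5 :=
  orderOf_eq_prime (by decide) (by decide)
theorem orderT : orderOf evenThreeCycle = 3 :=
  orderOf_eq_prime (by decide) (by decide)
theorem orderU : orderOf uElt = 2 :=
  orderOf_eq_prime (by decide) (by decide)
theorem orderV : orderOf vElt = 2 :=
  orderOf_eq_prime (by decide) (by decide)

/-- A subgroup of `A5` of order divisible by 30 containing a nontrivial element is everything. -/
theorem eq_top_of_thirty_dvd (M : Subgroup G5) (h30 : 30 ∣ Nat.card M)
    (hc : evenFiveCycle ∈ M) : M = ⊤ := by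
  have hdvd : Nat.card M ∣ 60 := by rw [← cardG5]; exact Subgroup.card_subgroup_dvd_card M
  obtain ⟨k, hk⟩ := h30
  have hk2 : k ∣ 2 := by
    rw [hk] at hdvd
    exact (mul_dvd_mul_iff_left (by norm_num : (30:ℕ) ≠ 0)).1 (by simpa using hdvd)
  rcases (Nat.prime_two).eq_one_or_self_of_dvd k hk2 with rfl | rfl
  · -- card = 30, index 2
    have hidx : M.index = 2 := by
      have := M.card_mul_index
      rw [cardG5, hk] at this
      omega
    haveI := normal_of_index_two' M hidx
    rcases Subgroup.Normal.eq_bot_or_eq_top ‹M.Normal› with hb | ht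
    · exfalso
      rw [hb, Subgroup.mem_bot] at hc
      have := orderC5
      rw [hc, orderOf_one] at this
      omega
    · exact ht
  · exact Subgroup.eq_top_of_card_eq M (by rw [hk, cardG5])

theorem memT1 : evenThreeCycle ∈ AltH1 := MulAction.mem_stabilizer_iff.2 (by decide)
theorem memV1 : vElt ∈ AltH1 := MulAction.mem_stabilizer_iff.2 (by decide)
theorem memC2 : evenFiveCycle ∈ AltH2 := Subgroup.le_normalizer (Subgroup.mem_zpowers _)
theorem memT3 : evenThreeCycle ∈ AltH3 := Subgroup.le_normalizer (Subgroup.mem_zpowers _)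
theorem memU3 : uElt ∈ AltH3 :=
  mem_normalizer_zpowers_of_conj' (by decide)

theorem dvd30 (M : Subgroup G5) (h2 : uElt ∈ M ∨ vElt ∈ M) (h3 : evenThreeCycle ∈ M)
    (h5 : evenFiveCycle ∈ M) : 30 ∣ Nat.card M := by
  have d2 : 2 ∣ Nat.card M := by
    rcases h2 with h | h
    · have := orderOf_dvd_card_of_mem' h; rwa [orderU] at this
    · have := orderOf_dvd_card_of_mem' h; rwa [orderV] at this
  have d3 : 3 ∣ Nat.card M := by
    have := orderOf_dvd_card_of_mem' h3; rwa [orderT] at this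
  have d5 : 5 ∣ Nat.card M := by
    have := orderOf_dvd_card_of_mem' h5; rwa [orderC5] at this
  have d6 : 6 ∣ Nat.card M := (by norm_num : Nat.Coprime 2 3).mul_dvd_of_dvd_of_dvd d2 d3
  exact Nat.Coprime.mul_dvd_of_dvd_of_dvd (by norm_num) d6 d5

theorem sup12 : AltH1 ⊔ AltH2 = ⊤ :=
  eq_top_of_thirty_dvd _
    (dvd30 _ (Or.inr (Subgroup.mem_sup_left memV1)) (Subgroup.mem_sup_left memT1) (Subgroup.mem_sup_right memC2))
    (Subgroup.mem_sup_right memC2)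

theorem sup23 : AltH2 ⊔ AltH3 = ⊤ :=
  eq_top_of_thirty_dvd _
    (dvd30 _ (Or.inl (Subgroup.mem_sup_right memU3)) (Subgroup.mem_sup_right memT3) (Subgroup.mem_sup_left memC2))
    (Subgroup.mem_sup_left memC2)

theorem sup13 : AltH1 ⊔ AltH3 = ⊤ := by
  set M := AltH1 ⊔ AltH3 with hM
  have hdvd : Nat.card M ∣ 60 := by rw [← cardG5]; exact Subgroup.card_subgroup_dvd_card M
  have h12 : 12 ∣ Nat.card M := by
    rw [← cardH1]; exact Subgroup.card_dvd_of_le le_sup_left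
  obtain ⟨k, hk⟩ := h12
  have hk5 : k ∣ 5 := by
    rw [hk] at hdvd
    exact (mul_dvd_mul_iff_left (by norm_num : (12:ℕ) ≠ 0)).1 (by simpa using hdvd)
  rcases (by norm_num : Nat.Prime 5).eq_one_or_self_of_dvd k hk5 with rfl | rfl
  · exfalso
    have hle : AltH1 ≤ M := le_sup_left
    have heq : AltH1 = M := Subgroup.eq_of_le_of_card_ge hle (by rw [cardH1, hk])
    have : uElt ∈ AltH1 := heq ▸ (Subgroup.mem_sup_right memU3 : uElt ∈ M)
    have := MulAction.mem_stabilizer_iff.1 this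
    revert this
    decide
  · exact Subgroup.eq_top_of_card_eq M (by rw [hk, cardG5])

end Generation

/-- for every pair of distinct subgroups among `H₁, H₂, H₃`, the
coset complex `CC(Alt₅, {H_i, H_j})` is connected; equivalently `Alt₅` is
generated by `H_i ∪ H_j`. -/
theorem statement14 :
    ∀ K L : Subgroup ↥(alternatingGroup (Fin 5)),
      K ∈ ({AltH1, AltH2, AltH3} : Set (Subgroup ↥(alternatingGroup (Fin 5)))) →
      L ∈ ({AltH1, AltH2, AltH3} : Set (Subgroup ↥(alternatingGroup (Fin 5)))) →
      K ≠ L →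
      IsNConnectedSpace
        (AbsSimplicialComplex.geomReal (cosetComplex ↥(alternatingGroup (Fin 5)) {K, L}))
        0 ∧
      K ⊔ L = ⊤ := by
  have h12 : AltH1 ⊔ AltH2 = ⊤ := sup12
  have h13 : AltH1 ⊔ AltH3 = ⊤ := sup13
  have h23 : AltH2 ⊔ AltH3 = ⊤ := sup23
  have h21 : AltH2 ⊔ AltH1 = ⊤ := by rw [sup_comm]; exact h12
  have h31 : AltH3 ⊔ AltH1 = ⊤ := by rw [sup_comm]; exact h13
  have h32 : AltH3 ⊔ AltH2 = ⊤ := by rw [sup_comm]; exact h23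
  intro K L hK hL hne
  simp only [Set.mem_insert_iff, Set.mem_singleton_iff] at hK hL
  rcases hK with rfl | rfl | rfl <;> rcases hL with rfl | rfl | rfl
  · exact absurd rfl hne
  · exact ⟨CosetConn.connected_of_sup_eq_top _ _ h12, h12⟩
  · exact ⟨CosetConn.connected_of_sup_eq_top _ _ h13, h13⟩
  · exact ⟨CosetConn.connected_of_sup_eq_top _ _ h21, h21⟩
  · exact absurd rfl hne
  · exact ⟨CosetConn.connected_of_sup_eq_top _ _ h23, h23⟩
  · exact ⟨CosetConn.connected_of_sup_eq_top _ _ h31, h31⟩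
  · exact ⟨CosetConn.connected_of_sup_eq_top _ _ h32, h32⟩
  · exact absurd rfl hne
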